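/- Resource substitution into an application distributes over bag splittings: for resource terms t, a bag c of resource terms, variable x, and bag b, the substitution (t c)⟨b/x⟩ equals the sum over all splittings b = b1 + b2 (counted via 2-partitionings of an enumeration of b) of (t⟨b1/x⟩)(c⟨b2/x⟩), and this definition is independent of the chosen enumeration of b. -/

import Mathlib

inductive RTerm : Type
  | var : ℕ → RTerm
  | lam : ℕ → RTerm → RTerm
  | app : RTerm → List RTerm → RTerm

def sel (b : List RTerm) (p : Fin b.length → Fin 2) (i : Fin 2) : List RTerm :=
  ((List.finRange b.length).filter (fun j => p j = i)).map b.get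

mutual
def subst : RTerm → ℕ → List RTerm → Multiset RTerm
  | .var y, x, b =>
      if y = x then (match b with | [u] => {u} | _ => 0)
      else if b.isEmpty then {RTerm.var y} else 0
  | .lam z t, x, b => (subst t x b).map (RTerm.lam z)
  | .app t c, x, b =>
      ∑ p : Fin b.length → Fin 2,
        (subst t x (sel b p 0)).bind (fun t' =>
          (substBag c x (sel b p 1)).map (fun c' => RTerm.app t' c'))
termination_by t _ _ => sizeOf t

def substBag : List RTerm → ℕ → List RTerm → Multiset (List RTerm)
  | [], _, b => if b.isEmpty then {[]} else 0
  | s :: c, x, b =>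
      ∑ p : Fin b.length → Fin 2,
        (subst s x (sel b p 0)).bind (fun s' =>
          (substBag c x (sel b p 1)).map (fun c' => s' :: c'))
termination_by c _ _ => sizeOf c
end

lemma sel_cons (a : RTerm) (l : List RTerm) (k : Fin 2) (q : Fin l.length → Fin 2) (i : Fin 2) :
    sel (a :: l) (Fin.cons k q) i = (if k = i then [a] else []) ++ sel l q i := by
  simp only [sel, List.length_cons, List.finRange_succ, List.filter_cons,
    List.filter_map, Fin.cons_zero, List.map_map, Function.comp_def, Fin.cons_succ,
    List.get_cons_succ]
  by_cases hk : k = i <;> simp [hk]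

lemma sum_cons_decomp {M : Type*} [AddCommMonoid M] (a : RTerm) (l : List RTerm)
    (g : (Fin (a :: l).length → Fin 2) → M) :
    (∑ p : Fin (a :: l).length → Fin 2, g p)
      = ∑ k : Fin 2, ∑ q : Fin l.length → Fin 2, g (Fin.cons k q) := by
  show (∑ p : Fin (l.length + 1) → Fin 2, g p)
      = ∑ k : Fin 2, ∑ q : Fin l.length → Fin 2, g (Fin.cons k q)
  rw [← (Fin.consEquiv (fun _ => Fin 2)).sum_comp g, Fintype.sum_prod_type]
  rfl

lemma psum_perm {M : Type*} [AddCommMonoid M] {b b' : List RTerm} (h : b.Perm b') :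
    ∀ (f : List RTerm → List RTerm → M),
      (∀ b1 b1' b2 b2', b1.Perm b1' → b2.Perm b2' → f b1 b2 = f b1' b2') →
      (∑ p : Fin b.length → Fin 2, f (sel b p 0) (sel b p 1))
        = ∑ p : Fin b'.length → Fin 2, f (sel b' p 0) (sel b' p 1) := by
  induction h with
  | nil => intro f hf; rfl
  | cons a hl ih =>
      intro f hf
      rw [sum_cons_decomp, sum_cons_decomp]
      refine Finset.sum_congr rfl fun k _ => ?_
      have := ih (fun b1 b2 =>
          f ((if k = 0 then [a] else []) ++ b1) ((if k = 1 then [a] else []) ++ b2))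
        (fun b1 b1' b2 b2' h1 h2 => hf _ _ _ _ (h1.append_left _) (h2.append_left _))
      simpa only [sel_cons] using this
  | swap u v l =>
      intro f hf
      simp only [sum_cons_decomp]
      rw [Finset.sum_comm]
      refine Finset.sum_congr rfl fun k1 _ => Finset.sum_congr rfl fun k2 _ =>
        Finset.sum_congr rfl fun q _ => ?_
      simp only [sel_cons]
      exact hf _ _ _ _
        (by rw [← List.append_assoc, ← List.append_assoc]
            exact (List.perm_append_comm).append_right _)
        (by rw [← List.append_assoc, ← List.append_assoc]
            exact (List.perm_append_comm).append_right _)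
  | trans _ _ ih1 ih2 => intro f hf; exact (ih1 f hf).trans (ih2 f hf)

lemma single_case_perm {b b' : List RTerm} (h : b.Perm b') :
    (match b with | [u] => ({u} : Multiset RTerm) | _ => 0)
      = match b' with | [u] => {u} | _ => 0 := by
  match b, b' with
  | [], b' =>
      obtain rfl : b' = [] := (List.nil_perm.mp h)
      rfl
  | [u], b' =>
      obtain rfl : b' = [u] := (List.singleton_perm.mp h).symm
      rfl
  | u :: v :: l, b' =>
      have hlen : b'.length = l.length + 2 := by simpa using h.length_eq.symm
      match b' with
      | [] => simp at hlen
      | [w] => simp at hlen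
      | w :: z :: m => rfl

lemma isEmpty_perm {b b' : List RTerm} (h : b.Perm b') : b.isEmpty = b'.isEmpty := by
  match b, b' with
  | [], b' =>
      obtain rfl : b' = [] := (List.nil_perm.mp h)
      rfl
  | u :: l, b' =>
      match b' with
      | [] => exact absurd h.length_eq (by simp)
      | w :: m => rfl

mutual
theorem subst_perm (t : RTerm) (x : ℕ) {b b' : List RTerm} (h : b.Perm b') :
    subst t x b = subst t x b' := by
  match t with
  | .var y =>
      match b, b' with
      | [], b' =>
          obtain rfl : b' = [] := List.nil_perm.mp h
          rfl
      | [u], b' =>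
          obtain rfl : b' = [u] := (List.singleton_perm.mp h).symm
          rfl
      | u :: v :: l, b' =>
        match b' with
        | [] => exact absurd h.length_eq (by simp)
        | [w] => exact absurd h.length_eq (by simp)
        | w :: z :: m =>
            rw [subst, subst]
            · simp
            all_goals exact fun _ hu => by simp at hu
  | .lam z t =>
      rw [subst, subst, subst_perm t x h]
  | .app t c =>
      rw [subst, subst]
      exact psum_perm h
        (fun b1 b2 => (subst t x b1).bind (fun t' =>
          (substBag c x b2).map (fun c' => RTerm.app t' c')))
        (fun b1 b1' b2 b2' h1 h2 => by
          simp only [subst_perm t x h1, substBag_perm c x h2])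
termination_by sizeOf t

theorem substBag_perm (c : List RTerm) (x : ℕ) {b b' : List RTerm} (h : b.Perm b') :
    substBag c x b = substBag c x b' := by
  match c with
  | [] => rw [substBag, substBag, isEmpty_perm h]
  | s :: c =>
      rw [substBag, substBag]
      exact psum_perm h
        (fun b1 b2 => (subst s x b1).bind (fun s' =>
          (substBag c x b2).map (fun c' => s' :: c')))
        (fun b1 b1' b2 b2' h1 h2 => by
          simp only [subst_perm s x h1, substBag_perm c x h2])
termination_by sizeOf c
end

/-- substitution into an application distributes over bag splittings:
`(t c)⟨b/x⟩` is the sum, over all 2-partitionings `p` of an enumeration of `b`,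
of `(t⟨b₁/x⟩)(c⟨b₂/x⟩)`; moreover the result is independent of the chosen
enumeration of the bag `b` (i.e. invariant under permutation of `b`). -/
theorem subst_app (t : RTerm) (c : List RTerm) (x : ℕ) (b b' : List RTerm)
    (h : b.Perm b') :
    subst (RTerm.app t c) x b =
      (∑ p : Fin b.length → Fin 2,
        (subst t x (sel b p 0)).bind (fun t' =>
          (substBag c x (sel b p 1)).map (fun c' => RTerm.app t' c'))) ∧
    subst (RTerm.app t c) x b = subst (RTerm.app t c) x b' := by
  exact ⟨by rw [subst], subst_perm _ x h⟩
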